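/- Let E be a real Hilbert space, J : E → ℝ a convex function, γ > 0, γ' > 0, and z ∈ E. Suppose q ∈ E is the proximal point of γJ at z, i.e. for all y ∈ E, γ·J(q) + (1/2)‖q − z‖² ≤ γ·J(y) + (1/2)‖y − z‖², and suppose p ∈ E is the proximal point of γ'J at z, i.e. for all y ∈ E, γ'·J(p) + (1/2)‖p − z‖² ≤ γ'·J(y) + (1/2)‖y − z‖². Then ‖p − q‖ ≤ (|γ' − γ| / γ)·‖z − q‖. -/

import Mathlib

open RealInnerProductSpace

private lemma nonneg_of_forall_Ioc {a b : ℝ}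
    (h : ∀ t : ℝ, 0 < t → t ≤ 1 → 0 ≤ a + t * b) : 0 ≤ a := by
  by_contra hc
  push_neg at hc
  set t : ℝ := min 1 (-a / (2 * (|b| + 1))) with ht
  have hb1 : 0 < |b| + 1 := by positivity
  have htpos : 0 < t := lt_min one_pos (div_pos (by linarith) (by positivity))
  have ht1 : t ≤ 1 := min_le_left _ _
  have ht2 : t ≤ -a / (2 * (|b| + 1)) := min_le_right _ _
  have htb : t * b ≤ -a / 2 := by
    calc t * b ≤ t * (|b| + 1) := by
          exact mul_le_mul_of_nonneg_left (le_trans (le_abs_self b) (by linarith)) htpos.le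
    _ ≤ (-a / (2 * (|b| + 1))) * (|b| + 1) :=
          mul_le_mul_of_nonneg_right ht2 hb1.le
    _ = -a / 2 := by field_simp
  have := h t htpos ht1
  linarith

private lemma prox_vi {E : Type*} [NormedAddCommGroup E] [InnerProductSpace ℝ E]
    (J : E → ℝ) (hJ : ConvexOn ℝ Set.univ J)
    {γ : ℝ} (hγ : 0 < γ) (z q : E)
    (hq : ∀ y : E, γ * J q + 1 / 2 * ‖q - z‖ ^ 2 ≤ γ * J y + 1 / 2 * ‖y - z‖ ^ 2)
    (y : E) : ⟪z - q, y - q⟫ ≤ γ * (J y - J q) := by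
  have key : 0 ≤ (γ * (J y - J q) + ⟪q - z, y - q⟫) + 0 * (1 / 2 * ‖y - q‖ ^ 2) → True := fun _ => trivial
  have main : 0 ≤ γ * (J y - J q) + ⟪q - z, y - q⟫ := by
    apply nonneg_of_forall_Ioc (b := 1 / 2 * ‖y - q‖ ^ 2)
    intro t htpos ht1
    have hconv := hJ.2 (Set.mem_univ q) (Set.mem_univ y) (by linarith : (0:ℝ) ≤ 1 - t)
      htpos.le (by ring)
    have heq : (1 - t) • q + t • y = q + t • (y - q) := by
      rw [smul_sub, sub_smul, one_smul]; abel
    rw [heq] at hconv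
    have hnorm : ‖q + t • (y - q) - z‖ ^ 2
        = ‖q - z‖ ^ 2 + 2 * (t * ⟪q - z, y - q⟫) + t ^ 2 * ‖y - q‖ ^ 2 := by
      have : q + t • (y - q) - z = (q - z) + t • (y - q) := by abel
      rw [this, norm_add_sq_real, real_inner_smul_right, norm_smul, mul_pow,
        Real.norm_eq_abs, sq_abs]
    have h1 := hq (q + t • (y - q))
    have h2 : γ * J (q + t • (y - q)) ≤ γ * ((1 - t) * J q + t * J y) :=
      mul_le_mul_of_nonneg_left hconv hγ.le
    have h3 : 0 ≤ t * (γ * (J y - J q) + ⟪q - z, y - q⟫ + t * (1 / 2 * ‖y - q‖ ^ 2)) := by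
      nlinarith [h1, h2, hnorm]
    have h4 := nonneg_of_mul_nonneg_right h3 htpos
    linarith
  have : ⟪q - z, y - q⟫ = -⟪z - q, y - q⟫ := by
    rw [← inner_neg_left]; congr 1; abel
  linarith [main, this ▸ main]

/-- Resolvent (proximal) nonexpansiveness in the step-size: if `q = prox_{γJ}(z)` and
`p = prox_{γ'J}(z)` for a convex function `J`, then
`‖p − q‖ ≤ (|γ' − γ| / γ) · ‖z − q‖`. -/
theorem prox_stepsize_perturbation {E : Type*} [NormedAddCommGroup E]
    [InnerProductSpace ℝ E] [CompleteSpace E]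
    (J : E → ℝ) (hJ : ConvexOn ℝ Set.univ J)
    {γ γ' : ℝ} (hγ : 0 < γ) (hγ' : 0 < γ') (z p q : E)
    (hq : ∀ y : E, γ * J q + 1 / 2 * ‖q - z‖ ^ 2 ≤ γ * J y + 1 / 2 * ‖y - z‖ ^ 2)
    (hp : ∀ y : E, γ' * J p + 1 / 2 * ‖p - z‖ ^ 2 ≤ γ' * J y + 1 / 2 * ‖y - z‖ ^ 2) :
    ‖p - q‖ ≤ (|γ' - γ| / γ) * ‖z - q‖ := by
  have h1 := prox_vi J hJ hγ z q hq p
  have h2 := prox_vi J hJ hγ' z p hp q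
  have hexp : ⟪z - p, q - p⟫ = -⟪z - q, p - q⟫ + ‖p - q‖ ^ 2 := by
    have : z - p = (z - q) + -(p - q) := by abel
    rw [this]
    have hq' : q - p = -(p - q) := by abel
    rw [hq', inner_add_left, inner_neg_neg, inner_neg_right, real_inner_self_eq_norm_sq]
  have key : γ * ‖p - q‖ ^ 2 ≤ (γ - γ') * ⟪z - q, p - q⟫ := by
    nlinarith [mul_le_mul_of_nonneg_left h1 hγ'.le, mul_le_mul_of_nonneg_left h2 hγ.le]
  have hcs : (γ - γ') * ⟪z - q, p - q⟫ ≤ |γ' - γ| * (‖z - q‖ * ‖p - q‖) := by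
    calc (γ - γ') * ⟪z - q, p - q⟫ ≤ |(γ - γ') * ⟪z - q, p - q⟫| := le_abs_self _
    _ = |γ' - γ| * |⟪z - q, p - q⟫| := by rw [abs_mul, abs_sub_comm]
    _ ≤ |γ' - γ| * (‖z - q‖ * ‖p - q‖) :=
        mul_le_mul_of_nonneg_left (abs_real_inner_le_norm _ _) (abs_nonneg _)
  rcases eq_or_lt_of_le (norm_nonneg (p - q)) with h0 | h0
  · rw [← h0]; positivity
  · have : γ * ‖p - q‖ ≤ |γ' - γ| * ‖z - q‖ := by
      have := key.trans hcs
      nlinarith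
    rw [div_mul_eq_mul_div, le_div_iff₀ hγ]
    linarith
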